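/- Let n be a positive integer, F a division ring, G a division subring of F, f_0 = 1, f_1, …, f_{n−1} a left G-basis of F, and φ : F → Mₙ(G) the left regular representation with respect to this basis. Then for every 0 ≤ k < n and a ∈ F: a ∈ S_k if and only if φ(a)_{ij} = 0 for all 1 ≤ i ≤ k+1 and k+2 ≤ j ≤ n (the (k+1)×(n−k−1) upper right block of φ(a) is zero); and for 1 ≤ k < n, a ∈ D_k if and only if φ(a)_{ij} = 0 for all 1 ≤ i ≤ k and k+2 ≤ j ≤ n (the k×(n−k−1) upper right block of φ(a) is zero). -/
import Mathlib

/-- `L_k`: the left `G`-subspace of `F` spanned by `f_0, …, f_k`. -/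
def Lset {F : Type*} [DivisionRing F] (G : Subring F) (f : ℕ → F) (k : ℕ) : Set F :=
  {x | ∃ c : ℕ → F, (∀ i, c i ∈ G) ∧ x = ∑ i ∈ Finset.range (k + 1), c i * f i}

/-- `S_k = {a ∈ F : L_k · a ⊆ L_k}`. -/
def Sset {F : Type*} [DivisionRing F] (G : Subring F) (f : ℕ → F) (k : ℕ) : Set F :=
  {a | ∀ x ∈ Lset G f k, x * a ∈ Lset G f k}

/-- `D_0 = F`, and `D_k = {a ∈ F : L_{k-1} · a ⊆ L_k}` for `k ≥ 1`. -/
def Dset {F : Type*} [DivisionRing F] (G : Subring F) (f : ℕ → F) : ℕ → Set F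
  | 0 => Set.univ
  | k + 1 => {a | ∀ x ∈ Lset G f k, x * a ∈ Lset G f (k + 1)}

section Aux

variable {F : Type*} [DivisionRing F] (G : Subring F) (f : ℕ → F)

lemma f_mem_Lset {i k : ℕ} (h : i ≤ k) : f i ∈ Lset G f k := by
  refine ⟨fun m => if m = i then 1 else 0, fun m => by dsimp only; split; exacts [G.one_mem, G.zero_mem], ?_⟩
  rw [Finset.sum_eq_single i]
  · simp
  · intro b _ hb; simp [hb]
  · intro hi; exact absurd (Finset.mem_range.2 (Nat.lt_succ_of_le h)) hi

lemma lemA (a : F) (k₁ k₂ : ℕ)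
    (h : ∀ i, i ≤ k₁ → f i * a ∈ Lset G f k₂) :
    ∀ x ∈ Lset G f k₁, x * a ∈ Lset G f k₂ := by
  rintro x ⟨c, hc, rfl⟩
  choose d hdG hdeq using h
  refine ⟨fun m => ∑ i ∈ Finset.range (k₁ + 1),
      c i * (if hi : i ≤ k₁ then d i hi m else 0), fun m => ?_, ?_⟩
  · refine Subring.sum_mem _ fun i _ => Subring.mul_mem _ (hc i) ?_
    split
    · exact hdG _ _ _
    · exact G.zero_mem
  calc (∑ i ∈ Finset.range (k₁ + 1), c i * f i) * a
      = ∑ i ∈ Finset.range (k₁ + 1), c i * (f i * a) := by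
        rw [Finset.sum_mul]; exact Finset.sum_congr rfl fun i _ => mul_assoc _ _ _
    _ = ∑ i ∈ Finset.range (k₁ + 1), c i *
          ∑ m ∈ Finset.range (k₂ + 1), (if hi : i ≤ k₁ then d i hi m else 0) * f m := by
        refine Finset.sum_congr rfl fun i hi => ?_
        have hi' : i ≤ k₁ := Nat.lt_succ_iff.mp (Finset.mem_range.mp hi)
        rw [hdeq i hi']
        congr 1
        exact Finset.sum_congr rfl fun m _ => by rw [dif_pos hi']
    _ = ∑ i ∈ Finset.range (k₁ + 1), ∑ m ∈ Finset.range (k₂ + 1),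
          (c i * (if hi : i ≤ k₁ then d i hi m else 0)) * f m := by
        refine Finset.sum_congr rfl fun i _ => ?_
        rw [Finset.mul_sum]
        exact Finset.sum_congr rfl fun m _ => (mul_assoc _ _ _).symm
    _ = ∑ m ∈ Finset.range (k₂ + 1),
          (∑ i ∈ Finset.range (k₁ + 1), c i * (if hi : i ≤ k₁ then d i hi m else 0)) * f m := by
        rw [Finset.sum_comm]
        exact Finset.sum_congr rfl fun m _ => (Finset.sum_mul _ _ _).symm

lemma lemB {n : ℕ}
    (hindep : ∀ c : ℕ → F, (∀ i, c i ∈ G) →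
      ∑ i ∈ Finset.range n, c i * f i = 0 → ∀ i < n, c i = 0)
    (φ : F → Matrix (Fin n) (Fin n) G)
    (hφ : ∀ (x : F) (i : Fin n), f (i : ℕ) * x = ∑ j : Fin n, (φ x i j : F) * f (j : ℕ))
    (k : ℕ) (hk : k < n) (a : F) (i : Fin n) :
    f (i : ℕ) * a ∈ Lset G f k ↔ ∀ j : Fin n, k + 1 ≤ (j : ℕ) → φ a i j = 0 := by
  have hbig : f (i : ℕ) * a = ∑ m ∈ Finset.range n,
      (if h : m < n then ((φ a i ⟨m, h⟩ : F)) else 0) * f m := by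
    rw [hφ a i, ← Fin.sum_univ_eq_sum_range (fun m =>
      (if h : m < n then ((φ a i ⟨m, h⟩ : F)) else 0) * f m) n]
    exact Finset.sum_congr rfl fun j _ => by simp [j.isLt]
  constructor
  · rintro ⟨c, hc, heq⟩ j hj
    set e : ℕ → F := fun m =>
      (if h : m < n then ((φ a i ⟨m, h⟩ : F)) else 0) - (if m ≤ k then c m else 0) with he
    have heG : ∀ m, e m ∈ G := by
      intro m
      refine Subring.sub_mem _ ?_ ?_
      · split
        · exact SetLike.coe_mem _
        · exact G.zero_mem
      · split
        · exact hc m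
        · exact G.zero_mem
    have hsum : ∑ m ∈ Finset.range n, e m * f m = 0 := by
      simp only [he, sub_mul, Finset.sum_sub_distrib]
      rw [← hbig]
      have h2 : ∑ m ∈ Finset.range n, (if m ≤ k then c m else 0) * f m
          = ∑ m ∈ Finset.range (k + 1), c m * f m := by
        rw [← Finset.sum_subset (Finset.range_subset_range.2 hk)]
        · exact Finset.sum_congr rfl fun m hm => by
            rw [if_pos (Nat.lt_succ_iff.mp (Finset.mem_range.mp hm))]
        · intro m _ hm
          rw [if_neg (fun h => hm (Finset.mem_range.2 (Nat.lt_succ_of_le h))), zero_mul]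
      rw [h2, ← heq, sub_self]
    have h0 := hindep e heG hsum (j : ℕ) j.isLt
    rw [he] at h0
    simp only [j.isLt, dif_pos] at h0
    rw [if_neg (by omega : ¬ (j : ℕ) ≤ k)] at h0
    have : ((φ a i j : F)) = 0 := by
      have : (⟨(j : ℕ), j.isLt⟩ : Fin n) = j := Fin.eta j j.isLt
      rw [this] at h0
      simpa using h0
    exact_mod_cast Subtype.ext this
  · intro h
    refine ⟨fun m => if h : m < n then ((φ a i ⟨m, h⟩ : F)) else 0, fun m => ?_, ?_⟩
    · dsimp only; split
      · exact SetLike.coe_mem _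
      · exact G.zero_mem
    rw [hbig]
    rw [← Finset.sum_subset (Finset.range_subset_range.2 hk)]
    intro m hm hm'
    have h1 : m < n := Finset.mem_range.mp hm
    have h2 : k + 1 ≤ m := Nat.not_lt.mp (fun h => hm' (Finset.mem_range.2 h))
    have := h ⟨m, h1⟩ h2
    simp [h1, this]

end Aux

/-- Under the left regular representation `φ` of `F` in `Mₙ(G)` with respect to the left
`G`-basis `f_0 = 1, …, f_{n-1}`: `a ∈ S_k` iff the `(k+1) × (n-k-1)` upper-right block of
`φ(a)` (rows `1,…,k+1`, columns `k+2,…,n`, one-indexed) is zero, and, for `1 ≤ k < n`,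
`a ∈ D_k` iff the `k × (n-k-1)` upper-right block of `φ(a)` (rows `1,…,k`, columns
`k+2,…,n`) is zero. -/
theorem stmt18 {F : Type*} [DivisionRing F] (n : ℕ) (hn : 1 ≤ n)
    (G : Subring F) (hG : ∀ x ∈ G, x⁻¹ ∈ G)
    (f : ℕ → F) (hf0 : f 0 = 1)
    (hspan : ∀ x : F, ∃ c : ℕ → F, (∀ i, c i ∈ G) ∧ x = ∑ i ∈ Finset.range n, c i * f i)
    (hindep : ∀ c : ℕ → F, (∀ i, c i ∈ G) →
      ∑ i ∈ Finset.range n, c i * f i = 0 → ∀ i < n, c i = 0)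
    (φ : F → Matrix (Fin n) (Fin n) G)
    (hφ : ∀ (x : F) (i : Fin n), f (i : ℕ) * x = ∑ j : Fin n, (φ x i j : F) * f (j : ℕ)) :
    (∀ k : ℕ, k < n → ∀ x : F, x ∈ Sset G f k ↔
      ∀ i j : Fin n, (i : ℕ) ≤ k → k + 1 ≤ (j : ℕ) → φ x i j = 0) ∧
    (∀ k : ℕ, 1 ≤ k → k < n → ∀ x : F, x ∈ Dset G f k ↔
      ∀ i j : Fin n, (i : ℕ) < k → k + 1 ≤ (j : ℕ) → φ x i j = 0) := by
  constructor
  · intro k hk x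
    constructor
    · intro hx i j hik hj
      have hfi : f (i : ℕ) ∈ Lset G f k := f_mem_Lset G f hik
      exact (lemB G f hindep φ hφ k hk x i).mp (hx _ hfi) j hj
    · intro h
      refine lemA G f x k k (fun i hik => ?_)
      have hi : i < n := lt_of_le_of_lt hik hk
      have := (lemB G f hindep φ hφ k hk x ⟨i, hi⟩).mpr (fun j hj => h ⟨i, hi⟩ j hik hj)
      simpa using this
  · intro k hk1 hk x
    obtain ⟨m, rfl⟩ : ∃ m, k = m + 1 := ⟨k - 1, by omega⟩
    show (∀ y ∈ Lset G f m, y * x ∈ Lset G f (m + 1)) ↔ _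
    constructor
    · intro hx i j hik hj
      have hi : (i : ℕ) ≤ m := by omega
      have hfi : f (i : ℕ) ∈ Lset G f m := f_mem_Lset G f hi
      exact (lemB G f hindep φ hφ (m + 1) hk x i).mp (hx _ hfi) j hj
    · intro h
      refine lemA G f x m (m + 1) (fun i hik => ?_)
      have hi : i < n := by omega
      have := (lemB G f hindep φ hφ (m + 1) hk x ⟨i, hi⟩).mpr
        (fun j hj => h ⟨i, hi⟩ j (by simpa using Nat.lt_succ_of_le hik) hj)
      simpa using this
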